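/- Let $(\Omega, \lambda)$ be a probability space, $T : \Omega \to \Omega$ a measure-preserving ergodic transformation, and $f : \Omega \to [0,\infty)$ measurable. Define $g(\omega) = f(T\omega) - f(\omega)$ and assume $g \in L^1(\Omega, \lambda)$. Then for $\lambda$-almost every $\omega$, $\lim_{n\to\infty} f(T^n \omega)/n = 0$. -/

import Mathlib

open MeasureTheory Filter

section Aux
variable {Ω : Type} [MeasurableSpace Ω]

/-- running maximum of Birkhoff sums: `maxS T h n = max (0, S₁, ..., Sₙ)`. -/
noncomputable def maxS (T : Ω → Ω) (h : Ω → ℝ) : ℕ → Ω → ℝ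
  | 0 => fun _ => 0
  | n + 1 => fun ω => max (maxS T h n ω) (birkhoffSum T h (n + 1) ω)

omit [MeasurableSpace Ω] in
lemma maxS_nonneg (T : Ω → Ω) (h : Ω → ℝ) (n : ℕ) (ω : Ω) : 0 ≤ maxS T h n ω := by
  induction n with
  | zero => simp [maxS]
  | succ n ih => exact le_trans ih (le_max_left _ _)

omit [MeasurableSpace Ω] in
lemma maxS_mono (T : Ω → Ω) (h : Ω → ℝ) {m n : ℕ} (hmn : m ≤ n) (ω : Ω) :
    maxS T h m ω ≤ maxS T h n ω := by
  induction n with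
  | zero => simp_all
  | succ n ih =>
    rcases Nat.eq_or_lt_of_le hmn with rfl | hlt
    · exact le_rfl
    · exact (ih (Nat.lt_succ_iff.mp hlt)).trans (le_max_left _ _)

omit [MeasurableSpace Ω] in
lemma birkhoffSum_le_maxS (T : Ω → Ω) (h : Ω → ℝ) {k n : ℕ} (hk : k ≤ n) (ω : Ω) :
    birkhoffSum T h k ω ≤ maxS T h n ω := by
  induction n with
  | zero =>
    obtain rfl : k = 0 := Nat.le_zero.mp hk
    simp [birkhoffSum_zero, maxS]
  | succ n ih =>
    rcases Nat.eq_or_lt_of_le hk with rfl | hlt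
    · exact le_max_right _ _
    · exact (ih (Nat.lt_succ_iff.mp hlt)).trans (le_max_left _ _)

lemma measurable_maxS {T : Ω → Ω} {h : Ω → ℝ} (hT : Measurable T) (hh : Measurable h)
    (n : ℕ) : Measurable (maxS T h n) := by
  induction n with
  | zero => exact measurable_const
  | succ n ih =>
    exact ih.max (Finset.measurable_sum _ fun i _ => hh.comp (hT.iterate i))

lemma integrable_birkhoffSum {lam : Measure Ω} {T : Ω → Ω} (hT : MeasurePreserving T lam lam)
    {h : Ω → ℝ} (hhm : Measurable h) (hh : Integrable h lam) (n : ℕ) :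
    Integrable (birkhoffSum T h n) lam := by
  apply integrable_finset_sum
  intro i _
  exact ((hT.iterate i).integrable_comp hhm.aestronglyMeasurable).mpr hh

lemma integrable_maxS {lam : Measure Ω} [IsProbabilityMeasure lam] {T : Ω → Ω}
    (hT : MeasurePreserving T lam lam) {h : Ω → ℝ} (hhm : Measurable h)
    (hh : Integrable h lam) (n : ℕ) : Integrable (maxS T h n) lam := by
  induction n with
  | zero => exact integrable_const 0
  | succ n ih => exact ih.sup (integrable_birkhoffSum hT hhm hh (n + 1))

omit [MeasurableSpace Ω] in
lemma maxS_succ_le (T : Ω → Ω) (h : Ω → ℝ) (n : ℕ) (ω : Ω) :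
    maxS T h (n + 1) ω ≤ max 0 (h ω + maxS T h n (T ω)) := by
  induction n with
  | zero =>
    show max (maxS T h 0 ω) (birkhoffSum T h 1 ω) ≤ _
    simp [maxS, birkhoffSum_one]
  | succ n ih =>
    show max (maxS T h (n + 1) ω) (birkhoffSum T h (n + 2) ω) ≤ _
    apply max_le
    · exact ih.trans (max_le_max le_rfl
        (add_le_add le_rfl (maxS_mono T h (Nat.le_succ n) (T ω))))
    · calc birkhoffSum T h (n + 2) ω = h ω + birkhoffSum T h (n + 1) (T ω) := by
            rw [birkhoffSum_succ']
        _ ≤ h ω + maxS T h (n + 1) (T ω) :=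
            add_le_add le_rfl (birkhoffSum_le_maxS T h le_rfl (T ω))
        _ ≤ _ := le_max_right _ _

/-- composition with `T` preserves integrals. -/
lemma integral_comp_eq {lam : Measure Ω} {T : Ω → Ω} (hT : MeasurePreserving T lam lam)
    {u : Ω → ℝ} (hu : Measurable u) :
    ∫ ω, u (T ω) ∂lam = ∫ ω, u ω ∂lam := by
  conv_rhs => rw [← hT.map_eq]
  rw [integral_map hT.measurable.aemeasurable hu.aestronglyMeasurable]

/-- Garsia's maximal ergodic theorem, truncated version. -/
lemma maximal_ergodic {lam : Measure Ω} [IsProbabilityMeasure lam] {T : Ω → Ω}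
    (hT : MeasurePreserving T lam lam)
    {h : Ω → ℝ} (hhm : Measurable h) (hh : Integrable h lam) (N : ℕ) :
    0 ≤ ∫ ω in {ω | 0 < maxS T h N ω}, h ω ∂lam := by
  rcases Nat.eq_zero_or_pos N with rfl | hN0
  · have : {ω : Ω | 0 < maxS T h 0 ω} = ∅ := by
      ext ω; simp [maxS]
    simp [this]
  obtain ⟨n, rfl⟩ := Nat.exists_eq_add_of_lt hN0
  rw [Nat.zero_add] at *
  set M := maxS T h (n + 1) with hM
  set E := {ω | 0 < M ω} with hEdef
  have hTm : Measurable T := hT.measurable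
  have hMm : Measurable M := measurable_maxS hTm hhm (n + 1)
  have hE : MeasurableSet E := measurableSet_lt measurable_const hMm
  have hMint : Integrable M lam := integrable_maxS hT hhm hh (n + 1)
  have hMTm : Measurable fun ω => M (T ω) := hMm.comp hTm
  have hMTint : Integrable (fun ω => M (T ω)) lam :=
    (hT.integrable_comp hMm.aestronglyMeasurable).mpr hMint
  -- pointwise inequality on E
  have key : ∀ ω ∈ E, M ω - M (T ω) ≤ h ω := by
    intro ω hω
    have h1 : M ω ≤ max 0 (h ω + maxS T h n (T ω)) := maxS_succ_le T h n ω
    have hpos : (0:ℝ) < M ω := hω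
    have h2 : 0 < h ω + maxS T h n (T ω) := by
      rcases (lt_max_iff.mp (lt_of_lt_of_le hpos h1)) with h' | h'
      · exact absurd h' (lt_irrefl 0)
      · exact h'
    have h3 : M ω ≤ h ω + maxS T h n (T ω) := by
      rwa [max_eq_right h2.le] at h1
    have h4 : maxS T h n (T ω) ≤ M (T ω) := maxS_mono T h (Nat.le_succ n) (T ω)
    linarith
  have step1 : ∫ ω in E, (M ω - M (T ω)) ∂lam ≤ ∫ ω in E, h ω ∂lam := by
    apply setIntegral_mono_on (hMint.sub hMTint).integrableOn hh.integrableOn hE key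
  have step2 : ∫ ω in E, (M ω - M (T ω)) ∂lam
      = ∫ ω in E, M ω ∂lam - ∫ ω in E, M (T ω) ∂lam :=
    integral_sub hMint.integrableOn hMTint.integrableOn
  have step3 : ∫ ω in E, M ω ∂lam = ∫ ω, M ω ∂lam := by
    rw [← integral_add_compl hE hMint]
    have : ∫ ω in Eᶜ, M ω ∂lam = 0 := by
      apply setIntegral_eq_zero_of_forall_eq_zero
      intro ω hω
      have h1 : ¬ (0 < M ω) := hω
      exact le_antisymm (not_lt.mp h1) (maxS_nonneg T h (n + 1) ω)
    rw [this]; ring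
  have step4 : ∫ ω in E, M (T ω) ∂lam ≤ ∫ ω, M (T ω) ∂lam :=
    setIntegral_le_integral hMTint
      (Eventually.of_forall fun ω => maxS_nonneg T h (n + 1) (T ω))
  have step5 : ∫ ω, M (T ω) ∂lam = ∫ ω, M ω ∂lam := integral_comp_eq hT hMm
  linarith

/-- Garsia's maximal ergodic theorem. -/
lemma maximal_ergodic' {lam : Measure Ω} [IsProbabilityMeasure lam] {T : Ω → Ω}
    (hT : MeasurePreserving T lam lam)
    {h : Ω → ℝ} (hhm : Measurable h) (hh : Integrable h lam) :
    0 ≤ ∫ ω in ⋃ N : ℕ, {ω | 0 < maxS T h N ω}, h ω ∂lam := by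
  have hTm : Measurable T := hT.measurable
  have hmeas : ∀ N : ℕ, MeasurableSet {ω | 0 < maxS T h N ω} := fun N =>
    measurableSet_lt measurable_const (measurable_maxS hTm hhm N)
  have hmono : Monotone fun N : ℕ => {ω | 0 < maxS T h N ω} := by
    intro m n hmn ω hω
    exact lt_of_lt_of_le hω (maxS_mono T h hmn ω)
  have htend := tendsto_setIntegral_of_monotone hmeas hmono hh.integrableOn
  exact ge_of_tendsto htend (Eventually.of_forall fun N => maximal_ergodic hT hhm hh N)

omit [MeasurableSpace Ω] in
lemma abs_min_sub_min (a b c : ℝ) : |min a c - min b c| ≤ |a - b| := by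
  rcases le_total a c with h1 | h1 <;> rcases le_total b c with h2 | h2 <;>
    simp [min_eq_left, min_eq_right, h1, h2, abs_le] <;>
    constructor <;> cases abs_cases (a - b) <;> linarith

/-- the increment of a nonnegative function has zero integral if integrable. -/
lemma integral_increment_zero {lam : Measure Ω} [IsProbabilityMeasure lam] {T : Ω → Ω}
    (hT : MeasurePreserving T lam lam) {f : Ω → ℝ} (hf : Measurable f)
    (hf_nonneg : ∀ ω, 0 ≤ f ω)
    (hg : Integrable (fun ω => f (T ω) - f ω) lam) :
    ∫ ω, (f (T ω) - f ω) ∂lam = 0 := by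
  have hTm : Measurable T := hT.measurable
  set φ : ℕ → Ω → ℝ := fun M ω => min (f (T ω)) M - min (f ω) M with hφ
  have hFm : ∀ M : ℕ, Measurable fun ω => min (f ω) (M:ℝ) := fun M =>
    hf.min measurable_const
  have hφm : ∀ M : ℕ, Measurable (φ M) := fun M =>
    ((hFm M).comp hTm).sub (hFm M)
  have hFint : ∀ M : ℕ, Integrable (fun ω => min (f ω) (M:ℝ)) lam := by
    intro M
    refine (integrable_const (M:ℝ)).mono (hFm M).aestronglyMeasurable ?_
    filter_upwards with ω
    rw [Real.norm_eq_abs, Real.norm_eq_abs, abs_of_nonneg (le_min (hf_nonneg ω) M.cast_nonneg)]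
    simp [min_le_right, abs_of_nonneg, M.cast_nonneg, le_abs_self]
  have hφint : ∀ M : ℕ, Integrable (φ M) lam := fun M =>
    ((hT.integrable_comp (hFm M).aestronglyMeasurable).mpr (hFint M)).sub (hFint M)
  have hFTint : ∀ M : ℕ, Integrable (fun ω => min (f (T ω)) (M:ℝ)) lam := fun M =>
    (hT.integrable_comp (hFm M).aestronglyMeasurable).mpr (hFint M)
  have hφzero : ∀ M : ℕ, ∫ ω, φ M ω ∂lam = 0 := by
    intro M
    have heq : ∫ ω, φ M ω ∂lam
        = (∫ ω, min (f (T ω)) (M:ℝ) ∂lam) - ∫ ω, min (f ω) (M:ℝ) ∂lam :=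
      integral_sub (hFTint M) (hFint M)
    rw [heq, sub_eq_zero]
    exact integral_comp_eq hT (hFm M)
  have hbound : ∀ M : ℕ, ∀ᵐ ω ∂lam, ‖φ M ω‖ ≤ |f (T ω) - f ω| := by
    intro M
    filter_upwards with ω
    rw [Real.norm_eq_abs]
    exact abs_min_sub_min _ _ _
  have htendφ : ∀ᵐ ω ∂lam, Tendsto (fun M : ℕ => φ M ω) atTop (nhds (f (T ω) - f ω)) := by
    filter_upwards with ω
    have : ∀ᶠ M : ℕ in atTop, φ M ω = f (T ω) - f ω := by
      rw [eventually_atTop]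
      refine ⟨⌈max (f (T ω)) (f ω)⌉₊, fun M hM => ?_⟩
      have hM' : max (f (T ω)) (f ω) ≤ (M:ℝ) := (Nat.ceil_le.mp hM)
      rw [hφ]
      simp only
      rw [min_eq_left ((le_max_left _ _).trans hM'), min_eq_left ((le_max_right _ _).trans hM')]
    have h' : (fun M : ℕ => φ M ω) =ᶠ[atTop] (fun _ => f (T ω) - f ω) := this
    exact Tendsto.congr' h'.symm tendsto_const_nhds
  have hDCT := tendsto_integral_of_dominated_convergence (fun ω => |f (T ω) - f ω|)
    (fun M => (hφm M).aestronglyMeasurable) hg.abs hbound htendφ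
  simp only [hφzero] at hDCT
  exact tendsto_nhds_unique hDCT tendsto_const_nhds

end Aux

/-- Tiozzo's Lemma 7 -/
theorem tendsto_along_orbit_div_n_zero
    {Ω : Type} [MeasurableSpace Ω] (lam : Measure Ω) [IsProbabilityMeasure lam]
    (T : Ω → Ω) (hT : Ergodic T lam)
    (f : Ω → ℝ) (hf : Measurable f) (hf_nonneg : ∀ ω, 0 ≤ f ω)
    (hg : Integrable (fun ω => f (T ω) - f ω) lam) :
    ∀ᵐ ω ∂lam, Tendsto (fun n : ℕ => f (T^[n] ω) / (n : ℝ)) atTop (nhds 0) := by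
  have hMP : MeasurePreserving T lam lam := hT.toMeasurePreserving
  have hTm : Measurable T := hMP.measurable
  set g : Ω → ℝ := fun ω => f (T ω) - f ω with hgdef
  have hgm : Measurable g := (hf.comp hTm).sub hf
  have hint : ∫ ω, g ω ∂lam = 0 := integral_increment_zero hMP hf hf_nonneg hg
  have horbit : ∀ ω (n : ℕ), f (T^[n] ω) = f ω + birkhoffSum T g n ω := by
    intro ω n
    induction n with
    | zero => simp [birkhoffSum_zero]
    | succ n ih =>
      rw [Function.iterate_succ_apply', birkhoffSum_succ]
      have : g (T^[n] ω) = f (T (T^[n] ω)) - f (T^[n] ω) := rfl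
      rw [this]; linarith
  have key : ∀ ε : ℝ, 0 < ε → ∀ᵐ ω ∂lam, ∀ᶠ n : ℕ in atTop, f (T^[n] ω) ≤ ε * n := by
    intro ε hε
    set h : Ω → ℝ := fun ω => g ω - ε / 2 with hhdef
    have hhm : Measurable h := hgm.sub measurable_const
    have hhint : Integrable h lam := hg.sub (integrable_const _)
    have hIh : ∫ ω, h ω ∂lam = -(ε / 2) := by
      rw [hhdef]
      simp only
      rw [integral_sub hg (integrable_const _), hint, integral_const]
      simp
    set E := ⋃ N : ℕ, {ω | 0 < maxS T h N ω} with hEdef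
    have hEm : MeasurableSet E := MeasurableSet.iUnion fun N =>
      measurableSet_lt measurable_const (measurable_maxS hTm hhm N)
    have hpos : 0 < lam Eᶜ := by
      rcases (zero_le : 0 ≤ lam Eᶜ).lt_or_eq with h' | h'
      · exact h'
      exfalso
      have h0 : lam Eᶜ = 0 := h'.symm
      have : ∫ ω in E, h ω ∂lam = ∫ ω, h ω ∂lam := by
        rw [← integral_add_compl hEm hhint, setIntegral_measure_zero _ h0, add_zero]
      have hME := maximal_ergodic' hMP hhm hhint
      rw [← hEdef] at hME
      rw [this, hIh] at hME
      linarith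
    set B := {ω | ∀ᶠ n : ℕ in atTop, f (T^[n] ω) ≤ ε * n} with hBdef
    have hBm : MeasurableSet B := by
      have : B = ⋃ N : ℕ, ⋂ n : ℕ, ⋂ _ : N ≤ n, {ω | f (T^[n] ω) ≤ ε * n} := by
        ext ω
        simp [hBdef, eventually_atTop, Set.mem_iUnion, Set.mem_iInter]
      rw [this]
      exact MeasurableSet.iUnion fun N => MeasurableSet.iInter fun n =>
        MeasurableSet.iInter fun _ =>
          measurableSet_le (hf.comp (hTm.iterate n)) measurable_const
    have hsub : Eᶜ ⊆ B := by
      intro ω hω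
      have hS : ∀ n : ℕ, birkhoffSum T h n ω ≤ 0 := by
        intro n
        have h1 : ¬ (0 < maxS T h n ω) := by
          intro hc
          exact hω (Set.mem_iUnion.mpr ⟨n, hc⟩)
        exact (birkhoffSum_le_maxS T h le_rfl ω).trans (not_lt.mp h1)
      have hSg : ∀ n : ℕ, birkhoffSum T g n ω ≤ n * (ε / 2) := by
        intro n
        have heq : birkhoffSum T h n ω = birkhoffSum T g n ω - n * (ε / 2) := by
          simp only [birkhoffSum, hhdef, Finset.sum_sub_distrib, Finset.sum_const,
            nsmul_eq_mul, Finset.card_range]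
        have h2 := hS n
        rw [heq] at h2
        linarith
      rw [hBdef]
      simp only [Set.mem_setOf_eq, eventually_atTop]
      refine ⟨⌈2 * f ω / ε⌉₊, fun n hn => ?_⟩
      have h2 : 2 * f ω / ε ≤ (n:ℝ) := Nat.ceil_le.mp hn
      have h3 : f ω ≤ ε / 2 * n := by
        rw [div_le_iff₀ hε] at h2
        linarith
      calc f (T^[n] ω) = f ω + birkhoffSum T g n ω := horbit ω n
        _ ≤ ε / 2 * n + n * (ε / 2) := add_le_add h3 (hSg n)
        _ = ε * n := by ring
    have hinv : T ⁻¹' B ⊆ B := by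
      intro ω hω
      simp only [hBdef, Set.mem_preimage, Set.mem_setOf_eq, eventually_atTop] at hω ⊢
      obtain ⟨N, hN⟩ := hω
      refine ⟨N + 1, fun n hn => ?_⟩
      obtain ⟨m, rfl⟩ : ∃ m, n = m + 1 :=
        ⟨n - 1, (Nat.succ_pred_eq_of_pos (lt_of_lt_of_le (Nat.succ_pos N) hn)).symm⟩
      rw [Function.iterate_succ_apply]
      have hm : N ≤ m := Nat.succ_le_succ_iff.mp hn
      refine (hN m hm).trans ?_
      have : (m:ℝ) ≤ (m:ℝ) + 1 := by linarith
      push_cast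
      nlinarith
    rcases hT.ae_empty_or_univ_of_preimage_ae_le hBm.nullMeasurableSet
        (HasSubset.Subset.eventuallyLE hinv) with h1 | h1
    · exfalso
      have hBnull : lam B = 0 := ae_eq_empty.mp h1
      have : lam Eᶜ = 0 := measure_mono_null hsub hBnull
      rw [this] at hpos
      exact lt_irrefl 0 hpos
    · have : lam Bᶜ = 0 := by
        rw [← ae_eq_univ]
        exact h1
      filter_upwards [measure_eq_zero_iff_ae_notMem.mp this] with ω hω
      simpa [hBdef] using not_not.mp hω
  have keyk : ∀ᵐ ω ∂lam, ∀ k : ℕ, ∀ᶠ n : ℕ in atTop, f (T^[n] ω) ≤ (1 / ((k:ℝ) + 1)) * n := by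
    rw [ae_all_iff]
    intro k
    exact key (1 / ((k:ℝ) + 1)) (by positivity)
  filter_upwards [keyk] with ω hω
  rw [Metric.tendsto_atTop]
  intro δ hδ
  obtain ⟨k, hk⟩ := exists_nat_one_div_lt hδ
  obtain ⟨N, hN⟩ := eventually_atTop.mp (hω k)
  refine ⟨max N 1, fun n hn => ?_⟩
  have hn1 : 1 ≤ n := le_trans (le_max_right N 1) hn
  have hnN : N ≤ n := le_trans (le_max_left N 1) hn
  have hnpos : (0:ℝ) < n := by exact_mod_cast hn1
  rw [Real.dist_eq, sub_zero, abs_of_nonneg (div_nonneg (hf_nonneg _) hnpos.le)]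
  have hle : f (T^[n] ω) / n ≤ 1 / ((k:ℝ) + 1) := by
    rw [div_le_iff₀ hnpos]
    calc f (T^[n] ω) ≤ 1 / ((k:ℝ) + 1) * n := hN n hnN
      _ = 1 / ((k:ℝ) + 1) * n := rfl
  exact lt_of_le_of_lt hle hk
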